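/- (Tits) Let e ≥ 1, q = 2^{2e+1}, and let σ : F_q → F_q be the field automorphism σ(t) = t^{2^{e+1}}. Then the set O = {[(1, xy + σ(x)·x² + σ(y), y, x)] : x, y ∈ F_q} ∪ {[(0,1,0,0)]} is an ovoid of PG(3,q): it consists of exactly q² + 1 points, no three of which are collinear. Moreover, O is not an elliptic quadric: there is no quadratic form Q on F_q⁴ with O = {[v] : v ≠ 0, Q(v) = 0}. -/

import Mathlib

section TitsAux

variable {F : Type} [Field F] (σ : F → F)

/-- `g x y = 0` implies `x = y = 0`. -/
lemma titsAux_g_eq_zero (h2 : (2:F) = 0)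
    (hmul : ∀ a b : F, σ (a*b) = σ a * σ b) (hσσ : ∀ t, σ (σ t) = t^2)
    (hS : ∀ x y : F, σ (x*y + σ x * x^2 + σ y) = σ x * σ y + x^2 * (σ x)^2 + y^2)
    (hs0 : σ 0 = 0) (hz : ∀ t : F, σ t = 0 → t = 0)
    {x y : F} (hf : x*y + σ x * x^2 + σ y = 0) : x = 0 ∧ y = 0 := by
  have hs : σ x * σ y + x^2 * (σ x)^2 + y^2 = 0 := by
    rw [← hS x y, hf, hs0]
  have hy : y * (σ x * x + y) = 0 := by
    linear_combination (σ x) * hf + hs - (x^2*(σ x)^2 + σ x * σ y) * h2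
  rcases mul_eq_zero.1 hy with hy0 | hy1
  · subst hy0
    have hx : σ x * x ^ 2 = 0 := by
      have := hf; rw [hs0] at this; linear_combination this
    rcases mul_eq_zero.1 hx with h | h
    · exact ⟨hz x h, rfl⟩
    · exact ⟨pow_eq_zero_iff (n := 2) (by norm_num) |>.1 h, rfl⟩
  · have hyx : y = σ x * x := by linear_combination hy1 - (σ x * x)*h2
    have hr : σ (σ x * x) = x^2 * σ x := by rw [hmul, hσσ]
    rw [hyx, hr] at hf
    have hx2 : x^2 * σ x = 0 := by linear_combination hf - (x^2 * σ x) * h2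
    rcases mul_eq_zero.1 hx2 with h | h
    · have hx0 : x = 0 := pow_eq_zero_iff (n := 2) (by norm_num) |>.1 h
      subst hx0; constructor; rfl; rw [hyx, hs0]; ring
    · have hx0 : x = 0 := hz x h
      subst hx0; constructor; rfl; rw [hyx]; ring

/-- Key polynomial identity. -/
lemma titsAux_J (h2 : (2:F) = 0) (x y : F) :
    x*y*(σ x * σ y + x^2*(σ x)^2 + y^2) + σ y * y^2
      + σ x * (x*y + σ x * x^2 + σ y)^2
    = (σ x * σ y + x^2*(σ x)^2 + y^2) * (x*y + σ x * x^2 + σ y) := by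
  linear_combination (x*y*(σ x)*(σ y) + x^3*y*(σ x)^2) * h2

end TitsAux

section TitsCore

variable {F : Type} [Field F] (σ : F → F)

/-- The core lemma: if `g (l*x) (l*y) = l * g x y` with `(x,y) ≠ 0`, `l ≠ 0`, then `l = 1`. -/
lemma titsAux_core (h2 : (2:F) = 0)
    (hmul : ∀ a b : F, σ (a*b) = σ a * σ b) (hσσ : ∀ t, σ (σ t) = t^2)
    (hS : ∀ x y : F, σ (x*y + σ x * x^2 + σ y) = σ x * σ y + x^2 * (σ x)^2 + y^2)
    (hs0 : σ 0 = 0) (hz : ∀ t : F, σ t = 0 → t = 0)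
    {x y l : F} (hxy : ¬ (x = 0 ∧ y = 0)) (hl : l ≠ 0)
    (heq : (l*x)*(l*y) + σ (l*x) * (l*x)^2 + σ (l*y) = l * (x*y + σ x * x^2 + σ y)) :
    l = 1 := by
  set f := x*y + σ x * x^2 + σ y with hfdef
  have hf : f ≠ 0 := fun h => hxy (titsAux_g_eq_zero σ h2 hmul hσσ hS hs0 hz h)
  set sf := σ x * σ y + x^2*(σ x)^2 + y^2 with hsfdef
  have hsf : sf ≠ 0 := by
    have hh : σ f = sf := hS x y
    rw [← hh]; intro h; exact hf (hz _ h)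
  have hsl : σ l ≠ 0 := fun h => hl (hz _ h)
  -- J at (x, y)
  have J1 := titsAux_J σ h2 x y
  -- J at (l*x, l*y)
  have J2 := titsAux_J σ h2 (l*x) (l*y)
  -- rewrite σ(l*x), σ(l*y) and the inner expression using heq
  rw [heq] at J2
  -- identify sf'' with σ l * sf
  have E3 : σ (l*x) * σ (l*y) + (l*x)^2*(σ (l*x))^2 + (l*y)^2 = σ l * sf := by
    have h1 : σ ((l*x)*(l*y) + σ (l*x) * (l*x)^2 + σ (l*y))
        = σ (l*x) * σ (l*y) + (l*x)^2*(σ (l*x))^2 + (l*y)^2 := hS (l*x) (l*y)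
    rw [heq, hmul, hS] at h1
    exact h1.symm
  rw [E3] at J2
  rw [hmul, hmul] at J2
  -- now derive (l-1) * (σ l * l * sf * f) = 0
  have key : (l - 1) * (σ l * l * sf * f) = 0 := by
    linear_combination J2 - (σ l * l^2) * J1
  rcases mul_eq_zero.1 key with h | h
  · exact sub_eq_zero.1 h
  · exfalso
    have := mul_ne_zero (mul_ne_zero (mul_ne_zero hsl hl) hsf) hf
    exact this h

/-- Translation identity. -/
lemma titsAux_translate (h2 : (2:F) = 0)
    (hadd : ∀ a b : F, σ (a+b) = σ a + σ b)
    (hmul : ∀ a b : F, σ (a*b) = σ a * σ b) (hσσ : ∀ t, σ (σ t) = t^2)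
    (x y a b : F) :
    (x+a)*(y + (b + x * σ a)) + σ (x+a) * (x+a)^2 + σ (y + (b + x * σ a))
      = (x*y + σ x * x^2 + σ y) + a*y + (b + a*σ a)*x + (a*b + a^2*σ a + σ b) := by
  have e1 : σ (x+a) = σ x + σ a := hadd x a
  have e2 : σ (y + (b + x * σ a)) = σ y + (σ b + σ x * a^2) := by
    rw [hadd, hadd, hmul, hσσ]
  rw [e1, e2]
  linear_combination (a^2*(σ x) + x*a*(σ a) + x*a*(σ x) + x^2*(σ a)) * h2

section TitsProj

variable {F : Type} [Field F]

lemma titsAux_vec_ne (g y x : F) : (![1, g, y, x] : Fin 4 → F) ≠ 0 := by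
  intro h
  have := congrFun h 0
  simp at this

lemma titsAux_inf_ne : (![0, 1, 0, 0] : Fin 4 → F) ≠ 0 := by
  intro h
  have := congrFun h 1
  simp at this

lemma titsAux_affine_inj {g y x g' y' x' : F}
    (h : Projectivization.mk F ![1, g, y, x] (titsAux_vec_ne g y x)
       = Projectivization.mk F ![1, g', y', x'] (titsAux_vec_ne g' y' x')) :
    g = g' ∧ y = y' ∧ x = x' := by
  rw [Projectivization.mk_eq_mk_iff'] at h
  obtain ⟨a, ha⟩ := h
  have h0 := congrFun ha 0
  have h1 := congrFun ha 1
  have h2 := congrFun ha 2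
  have h3 := congrFun ha 3
  simp [Pi.smul_apply, smul_eq_mul] at h0 h1 h2 h3
  subst h0
  simp_all

lemma titsAux_affine_ne_inf {g y x : F} :
    Projectivization.mk F ![1, g, y, x] (titsAux_vec_ne g y x)
      ≠ Projectivization.mk F ![0, 1, 0, 0] titsAux_inf_ne := by
  intro h
  rw [Projectivization.mk_eq_mk_iff'] at h
  obtain ⟨a, ha⟩ := h
  have h0 := congrFun ha 0
  simp [Pi.smul_apply, smul_eq_mul] at h0

lemma titsAux_dep {v1 v2 v3 : Fin 4 → F}
    (h : Module.finrank F
      ↥((Submodule.span F {v1} ⊔ Submodule.span F {v2}) ⊔ Submodule.span F {v3}) ≤ 2) :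
    ∃ c1 c2 c3 : F, c1 • v1 + c2 • v2 + c3 • v3 = 0 ∧ ¬ (c1 = 0 ∧ c2 = 0 ∧ c3 = 0) := by
  have hnl : ¬ LinearIndependent F ![v1, v2, v3] := by
    intro hli
    have hcard := finrank_span_eq_card hli
    have hr : Set.range ![v1, v2, v3] = insert v1 (insert v2 {v3}) := by
      ext w
      simp [Fin.exists_fin_succ, Matrix.range_cons, Matrix.range_empty]
      tauto
    rw [hr] at hcard
    rw [Submodule.span_insert, Submodule.span_insert, ← sup_assoc] at hcard
    simp only [Fintype.card_fin] at hcard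
    rw [hcard] at h
    omega
  obtain ⟨c, hc, i, hi⟩ := Fintype.not_linearIndependent_iff.1 hnl
  refine ⟨c 0, c 1, c 2, ?_, ?_⟩
  · have := hc
    rw [Fin.sum_univ_three] at this
    simpa using this
  · rintro ⟨h0, h1, h2⟩
    fin_cases i <;> simp_all

lemma titsAux_infcase {F : Type} [Field F] {g2 y2 x2 g3 y3 x3 c1 c2 c3 : F}
    (e0 : c2 + c3 = 0) (e1 : c1 + c2*g2 + c3*g3 = 0)
    (e2 : c2*y2 + c3*y3 = 0) (e3 : c2*x2 + c3*x3 = 0)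
    (hne : ¬ (c1 = 0 ∧ c2 = 0 ∧ c3 = 0)) : y2 = y3 ∧ x2 = x3 := by
  by_cases hc2 : c2 = 0
  · exfalso
    have hc3 : c3 = 0 := by linear_combination e0 - hc2
    refine hne ⟨?_, hc2, hc3⟩
    linear_combination e1 - g2 * hc2 - g3 * hc3
  · constructor
    · have h : c2 * (y2 - y3) = 0 := by linear_combination e2 - y3 * e0
      rcases mul_eq_zero.1 h with h | h
      · exact absurd h hc2
      · exact sub_eq_zero.1 h
    · have h : c2 * (x2 - x3) = 0 := by linear_combination e3 - x3 * e0
      rcases mul_eq_zero.1 h with h | h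
      · exact absurd h hc2
      · exact sub_eq_zero.1 h

lemma titsAux_mk_eq {F : Type} [Field F] (σ : F → F) {x y x' y' : F}
    (hx : x = x') (hy : y = y') :
    Projectivization.mk F ![1, x*y + σ x*x^2 + σ y, y, x] (titsAux_vec_ne _ _ _)
      = Projectivization.mk F ![1, x'*y' + σ x'*x'^2 + σ y', y', x'] (titsAux_vec_ne _ _ _) := by
  subst hx; subst hy; rfl
lemma titsAux_qexp {F : Type} [Field F] (Q : QuadraticForm F (Fin 4 → F))
    (u v w : Fin 4 → F) (s t : F) :
    Q (u + s • v + t • w)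
      = Q u + s * s * Q v + t * t * Q w
        + s * QuadraticMap.polar Q u v
        + t * QuadraticMap.polar Q u w
        + s * t * QuadraticMap.polar Q v w := by
  rw [QuadraticMap.map_add Q (u + s • v) (t • w)]
  rw [QuadraticMap.map_add Q u (s • v)]
  rw [QuadraticMap.map_smul, QuadraticMap.map_smul]
  rw [QuadraticMap.polar_add_left]
  simp only [QuadraticMap.polar_smul_left, QuadraticMap.polar_smul_right, smul_eq_mul]
  ring



/-- No three points of the set `A ⊆ PG(3,q)` are collinear, where three points are
collinear if their representative vectors span a subspace of dimension at most 2. -/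
def NoThreeCollinear (F : Type) [Field F] (A : Set (Projectivization F (Fin 4 → F))) : Prop :=
  ∀ p₁ ∈ A, ∀ p₂ ∈ A, ∀ p₃ ∈ A, p₁ ≠ p₂ → p₁ ≠ p₃ → p₂ ≠ p₃ →
    ¬ (Module.finrank F ↥(p₁.submodule ⊔ p₂.submodule ⊔ p₃.submodule) ≤ 2)

/-- Tits: for `q = 2^{2e+1}` (`e ≥ 1`) and `σ : t ↦ t^{2^{e+1}}`, the set
`O = {[(1, xy + σ(x)x² + σ(y), y, x)] : x, y ∈ F_q} ∪ {[(0,1,0,0)]}` is an ovoid of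
`PG(3,q)` — it has exactly `q² + 1` points, no three collinear — and `O` is not an
elliptic quadric: it is not the projective zero set of any quadratic form on `F⁴`. -/
theorem tits_ovoid (e : ℕ) (he : 1 ≤ e) (q : ℕ) (hq2 : q = 2 ^ (2 * e + 1))
    (F : Type) [Field F] [Fintype F] (hq : Fintype.card F = q)
    (σ : F → F) (hσ : ∀ t, σ t = t ^ 2 ^ (e + 1))
    (O : Set (Projectivization F (Fin 4 → F)))
    (hO : O = {p | ∃ (x y : F)
          (hv : (![1, x * y + σ x * x ^ 2 + σ y, y, x] : Fin 4 → F) ≠ 0),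
          p = Projectivization.mk F ![1, x * y + σ x * x ^ 2 + σ y, y, x] hv} ∪
        {p | ∃ hv : (![0, 1, 0, 0] : Fin 4 → F) ≠ 0,
          p = Projectivization.mk F ![0, 1, 0, 0] hv}) :
    O.ncard = q ^ 2 + 1 ∧ NoThreeCollinear F O ∧
      ¬ ∃ Q : QuadraticForm F (Fin 4 → F),
          O = {p | ∃ (v : Fin 4 → F) (hv : v ≠ 0),
            p = Projectivization.mk F v hv ∧ Q v = 0} := by
  subst hq2
  -- characteristic 2
  haveI hp2 : CharP F 2 := by
    obtain ⟨p, hc⟩ := CharP.exists F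
    haveI := hc
    obtain ⟨n, hp, hcard⟩ := FiniteField.card F p
    rw [hq] at hcard
    have hpd : p ∣ 2 ^ (2 * e + 1) := by
      rw [hcard]
      exact dvd_pow_self p n.pos.ne'
    have hp2' : p = 2 :=
      (Nat.prime_dvd_prime_iff_eq hp Nat.prime_two).1 (hp.dvd_of_dvd_pow hpd)
    rw [← hp2']
    exact hc
  have h2 : (2 : F) = 0 := by
    have := CharP.cast_eq_zero F 2
    exact_mod_cast this
  have hadd : ∀ a b : F, σ (a + b) = σ a + σ b := by
    intro a b
    rw [hσ, hσ, hσ]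
    haveI : Fact (Nat.Prime 2) := ⟨Nat.prime_two⟩
    exact add_pow_char_pow (R := F) (p := 2) a b (e+1)
  have hmul : ∀ a b : F, σ (a * b) = σ a * σ b := by
    intro a b; rw [hσ, hσ, hσ, mul_pow]
  have hpow_card : ∀ t : F, t ^ 2 ^ (2 * e + 1) = t := by
    intro t; rw [← hq]; exact FiniteField.pow_card t
  have hσσ : ∀ t : F, σ (σ t) = t ^ 2 := by
    intro t
    rw [hσ, hσ, ← pow_mul]
    have hexp : 2 ^ (e + 1) * 2 ^ (e + 1) = 2 ^ (2 * e + 1) * 2 := by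
      rw [← pow_add, ← pow_succ]
      congr 1
      omega
    rw [hexp, pow_mul, hpow_card]
  have hs0 : σ 0 = 0 := by
    rw [hσ]
    exact zero_pow (by positivity)
  have hz : ∀ t : F, σ t = 0 → t = 0 := by
    intro t h
    rw [hσ] at h
    exact pow_eq_zero_iff (by positivity) |>.1 h
  have hS : ∀ x y : F, σ (x * y + σ x * x ^ 2 + σ y)
      = σ x * σ y + x ^ 2 * (σ x) ^ 2 + y ^ 2 := by
    intro x y
    have hx2 : σ (x ^ 2) = (σ x) ^ 2 := by
      rw [hσ, hσ, ← pow_mul, ← pow_mul, mul_comm]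
    rw [hadd, hadd, hmul x y, hmul (σ x) (x ^ 2), hσσ, hσσ, hx2]
  -- membership characterization
  have hOmem : ∀ p, p ∈ O ↔
      ((∃ x y : F, p = Projectivization.mk F ![1, x * y + σ x * x ^ 2 + σ y, y, x]
          (titsAux_vec_ne _ _ _)) ∨
        p = Projectivization.mk F ![0, 1, 0, 0] titsAux_inf_ne) := by
    intro p
    rw [hO]
    simp only [Set.mem_union, Set.mem_setOf_eq]
    constructor
    · rintro (⟨x, y, hv, rfl⟩ | ⟨hv, rfl⟩)
      · exact Or.inl ⟨x, y, rfl⟩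
      · exact Or.inr rfl
    · rintro (⟨x, y, rfl⟩ | rfl)
      · exact Or.inl ⟨x, y, titsAux_vec_ne _ _ _, rfl⟩
      · exact Or.inr ⟨titsAux_inf_ne, rfl⟩
  refine ⟨?_, ?_, ?_⟩
  · -- cardinality
    have hOeq : O = Set.range (fun z : F × F =>
        Projectivization.mk F ![1, z.1 * z.2 + σ z.1 * z.1 ^ 2 + σ z.2, z.2, z.1]
          (titsAux_vec_ne _ _ _)) ∪ {Projectivization.mk F ![0, 1, 0, 0] titsAux_inf_ne} := by
      ext p
      rw [Set.mem_union, Set.mem_singleton_iff, hOmem]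
      constructor
      · rintro (⟨x, y, rfl⟩ | rfl)
        · exact Or.inl ⟨(x, y), rfl⟩
        · exact Or.inr rfl
      · rintro (⟨⟨x, y⟩, rfl⟩ | rfl)
        · exact Or.inl ⟨x, y, rfl⟩
        · exact Or.inr rfl
    rw [hOeq]
    have hdisj : Disjoint (Set.range (fun z : F × F =>
        Projectivization.mk F ![1, z.1 * z.2 + σ z.1 * z.1 ^ 2 + σ z.2, z.2, z.1]
          (titsAux_vec_ne _ _ _)))
        {Projectivization.mk F ![0, 1, 0, 0] titsAux_inf_ne} := by
      rw [Set.disjoint_singleton_right]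
      rintro ⟨⟨x, y⟩, hc⟩
      exact titsAux_affine_ne_inf hc
    rw [Set.ncard_union_eq hdisj (Set.toFinite _) (Set.toFinite _), Set.ncard_singleton]
    have hinj : Function.Injective (fun z : F × F =>
        Projectivization.mk F ![1, z.1 * z.2 + σ z.1 * z.1 ^ 2 + σ z.2, z.2, z.1]
          (titsAux_vec_ne _ _ _)) := by
      rintro ⟨x, y⟩ ⟨x', y'⟩ h
      obtain ⟨-, h2, h3⟩ := titsAux_affine_inj h
      exact Prod.ext h3 h2
    rw [← Nat.card_coe_set_eq, Nat.card_range_of_injective hinj,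
      Nat.card_eq_fintype_card, Fintype.card_prod, hq]
    ring
  · -- no three collinear
    intro p1 hp1 p2 hp2 p3 hp3 h12 h13 h23 hrank
    rw [hOmem] at hp1 hp2 hp3
    rcases hp1 with ⟨x1, y1, rfl⟩ | rfl
    · rcases hp2 with ⟨x2, y2, rfl⟩ | rfl
      · rcases hp3 with ⟨x3, y3, rfl⟩ | rfl
        · -- all three affine: the main case
          simp only [Projectivization.submodule_mk] at hrank
          obtain ⟨c1, c2, c3, hsum, hne⟩ := titsAux_dep hrank
          have E0' := congrFun hsum 0
          have E1' := congrFun hsum 1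
          have E2' := congrFun hsum 2
          have E3' := congrFun hsum 3
          simp at E0' E1' E2' E3'
          have E0 : c1 + c2 + c3 = 0 := by linear_combination E0'
          have E1 : c1 * (x1*y1 + σ x1*x1^2 + σ y1) + c2 * (x2*y2 + σ x2*x2^2 + σ y2)
              + c3 * (x3*y3 + σ x3*x3^2 + σ y3) = 0 := by linear_combination E1'
          have E2 : c1 * y1 + c2 * y2 + c3 * y3 = 0 := by linear_combination E2'
          have E3 : c1 * x1 + c2 * x2 + c3 * x3 = 0 := by linear_combination E3'
          clear E0' E1' E2' E3'
          have hc1 : c1 ≠ 0 := by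
            intro h1
            by_cases hb : c2 = 0
            · exact hne ⟨h1, hb, by linear_combination E0 - h1 - hb⟩
            · have hx : x2 = x3 := by
                have hh : c2*(x2 - x3) = 0 := by
                  linear_combination E3 - x3*E0 - (x1 - x3)*h1
                exact sub_eq_zero.1 ((mul_eq_zero.1 hh).resolve_left hb)
              have hy : y2 = y3 := by
                have hh : c2*(y2 - y3) = 0 := by
                  linear_combination E2 - y3*E0 - (y1 - y3)*h1
                exact sub_eq_zero.1 ((mul_eq_zero.1 hh).resolve_left hb)
              exact h23 (titsAux_mk_eq σ hx hy)
          have hc2 : c2 ≠ 0 := by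
            intro h1
            by_cases hb : c1 = 0
            · exact hne ⟨hb, h1, by linear_combination E0 - h1 - hb⟩
            · have hx : x1 = x3 := by
                have hh : c1*(x1 - x3) = 0 := by
                  linear_combination E3 - x3*E0 - (x2 - x3)*h1
                exact sub_eq_zero.1 ((mul_eq_zero.1 hh).resolve_left hb)
              have hy : y1 = y3 := by
                have hh : c1*(y1 - y3) = 0 := by
                  linear_combination E2 - y3*E0 - (y2 - y3)*h1
                exact sub_eq_zero.1 ((mul_eq_zero.1 hh).resolve_left hb)
              exact h13 (titsAux_mk_eq σ hx hy)
          have hc3 : c3 ≠ 0 := by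
            intro h1
            by_cases hb : c1 = 0
            · exact hne ⟨hb, by linear_combination E0 - h1 - hb, h1⟩
            · have hx : x1 = x2 := by
                have hh : c1*(x1 - x2) = 0 := by
                  linear_combination E3 - x2*E0 - (x3 - x2)*h1
                exact sub_eq_zero.1 ((mul_eq_zero.1 hh).resolve_left hb)
              have hy : y1 = y2 := by
                have hh : c1*(y1 - y2) = 0 := by
                  linear_combination E2 - y2*E0 - (y3 - y2)*h1
                exact sub_eq_zero.1 ((mul_eq_zero.1 hh).resolve_left hb)
              exact h12 (titsAux_mk_eq σ hx hy)
          set l : F := -(c2 / c3) with hl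
          have hlne : l ≠ 0 := neg_ne_zero.2 (div_ne_zero hc2 hc3)
          have hdiv : ∀ u v : F, c3*u = -(c2*v) → u = l*v := by
            intro u v h
            have hlv : c3 * (l*v) = -(c2*v) := by rw [hl]; field_simp
            exact (mul_left_cancel₀ hc3 (hlv.trans h.symm)).symm
          have hXXraw : c3*(x3 + x1) = -(c2*(x2 + x1)) := by
            linear_combination E3 - x1*E0 + x1*(c2 + c3)*h2
          have hYYraw : c3*(y3 + (y1 + (x3 + x1)*σ x1))
              = -(c2*(y2 + (y1 + (x2 + x1)*σ x1))) := by
            linear_combination E2 - y1*E0 + y1*(c2 + c3)*h2 + σ x1 * hXXraw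
          have hGGraw : c3*((x3*y3 + σ x3*x3^2 + σ y3) + (x1*y1 + σ x1*x1^2 + σ y1))
              = -(c2*((x2*y2 + σ x2*x2^2 + σ y2) + (x1*y1 + σ x1*x1^2 + σ y1))) := by
            linear_combination E1 - (x1*y1 + σ x1*x1^2 + σ y1)*E0
              + (c2 + c3)*(x1*y1 + σ x1*x1^2 + σ y1)*h2
          have hXX := hdiv _ _ hXXraw
          have hYY := hdiv _ _ hYYraw
          have hGG := hdiv _ _ hGGraw
          have T2 := titsAux_translate σ h2 hadd hmul hσσ (x2 + x1)
            (y2 + (y1 + (x2 + x1)*σ x1)) x1 y1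
          have T3 := titsAux_translate σ h2 hadd hmul hσσ (x3 + x1)
            (y3 + (y1 + (x3 + x1)*σ x1)) x1 y1
          have hA2 : x2 + x1 + x1 = x2 := by linear_combination x1*h2
          have hB2 : y2 + (y1 + (x2 + x1)*σ x1) + (y1 + (x2 + x1) * σ x1) = y2 := by
            linear_combination (y1 + (x2 + x1)*σ x1)*h2
          have hA3 : x3 + x1 + x1 = x3 := by linear_combination x1*h2
          have hB3 : y3 + (y1 + (x3 + x1)*σ x1) + (y1 + (x3 + x1) * σ x1) = y3 := by
            linear_combination (y1 + (x3 + x1)*σ x1)*h2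
          rw [hA2, hB2] at T2
          rw [hA3, hB3] at T3
          have heq : (l*(x2 + x1))*(l*(y2 + (y1 + (x2 + x1)*σ x1)))
              + σ (l*(x2 + x1)) * (l*(x2 + x1))^2
              + σ (l*(y2 + (y1 + (x2 + x1)*σ x1)))
              = l * ((x2 + x1)*(y2 + (y1 + (x2 + x1)*σ x1))
                + σ (x2 + x1) * (x2 + x1)^2 + σ (y2 + (y1 + (x2 + x1)*σ x1))) := by
            rw [← hXX, ← hYY]
            linear_combination hGG - x1*hYY - (y1 + x1*σ x1)*hXX - T3 + l*T2
              - (1 - l)*(x1*y1 + σ x1*x1^2 + σ y1)*h2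
          have hxy : ¬ ((x2 + x1) = 0 ∧ (y2 + (y1 + (x2 + x1)*σ x1)) = 0) := by
            rintro ⟨ha, hb⟩
            have hx : x1 = x2 := by linear_combination ha - x2*h2
            have hy : y1 = y2 := by linear_combination hb - y2*h2 - σ x1*ha
            exact h12 (titsAux_mk_eq σ hx hy)
          have hl1 : l = 1 := titsAux_core σ h2 hmul hσσ hS hs0 hz hxy hlne heq
          rw [hl1, one_mul] at hXX hYY
          have hx23 : x2 = x3 := by linear_combination -hXX
          have hy23 : y2 = y3 := by linear_combination -hYY + σ x1 * hXX
          exact h23 (titsAux_mk_eq σ hx23 hy23)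
        · -- p3 = infinity
          simp only [Projectivization.submodule_mk] at hrank
          obtain ⟨c1, c2, c3, hsum, hne⟩ := titsAux_dep hrank
          have E0' := congrFun hsum 0
          have E1' := congrFun hsum 1
          have E2' := congrFun hsum 2
          have E3' := congrFun hsum 3
          simp at E0' E1' E2' E3'
          have F0 : c1 + c2 = 0 := by linear_combination E0'
          have F1 : c3 + c1*(x1*y1 + σ x1*x1^2 + σ y1)
              + c2*(x2*y2 + σ x2*x2^2 + σ y2) = 0 := by linear_combination E1'
          have F2 : c1*y1 + c2*y2 = 0 := by linear_combination E2'
          have F3 : c1*x1 + c2*x2 = 0 := by linear_combination E3'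
          obtain ⟨hy, hx⟩ := titsAux_infcase F0 F1 F2 F3 (by tauto)
          exact h12 (titsAux_mk_eq σ hx hy)
      · -- p2 = infinity
        rcases hp3 with ⟨x3, y3, rfl⟩ | rfl
        · simp only [Projectivization.submodule_mk] at hrank
          obtain ⟨c1, c2, c3, hsum, hne⟩ := titsAux_dep hrank
          have E0' := congrFun hsum 0
          have E1' := congrFun hsum 1
          have E2' := congrFun hsum 2
          have E3' := congrFun hsum 3
          simp at E0' E1' E2' E3'
          have F0 : c1 + c3 = 0 := by linear_combination E0'
          have F1 : c2 + c1*(x1*y1 + σ x1*x1^2 + σ y1)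
              + c3*(x3*y3 + σ x3*x3^2 + σ y3) = 0 := by linear_combination E1'
          have F2 : c1*y1 + c3*y3 = 0 := by linear_combination E2'
          have F3 : c1*x1 + c3*x3 = 0 := by linear_combination E3'
          obtain ⟨hy, hx⟩ := titsAux_infcase F0 F1 F2 F3 (by tauto)
          exact h13 (titsAux_mk_eq σ hx hy)
        · exact h23 rfl
    · -- p1 = infinity
      rcases hp2 with ⟨x2, y2, rfl⟩ | rfl
      · rcases hp3 with ⟨x3, y3, rfl⟩ | rfl
        · simp only [Projectivization.submodule_mk] at hrank
          obtain ⟨c1, c2, c3, hsum, hne⟩ := titsAux_dep hrank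
          have E0' := congrFun hsum 0
          have E1' := congrFun hsum 1
          have E2' := congrFun hsum 2
          have E3' := congrFun hsum 3
          simp at E0' E1' E2' E3'
          have F0 : c2 + c3 = 0 := by linear_combination E0'
          have F1 : c1 + c2*(x2*y2 + σ x2*x2^2 + σ y2)
              + c3*(x3*y3 + σ x3*x3^2 + σ y3) = 0 := by linear_combination E1'
          have F2 : c2*y2 + c3*y3 = 0 := by linear_combination E2'
          have F3 : c2*x2 + c3*x3 = 0 := by linear_combination E3'
          obtain ⟨hy, hx⟩ := titsAux_infcase F0 F1 F2 F3 (by tauto)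
          exact h23 (titsAux_mk_eq σ hx hy)
        · exact h13 rfl
      · exact h12 rfl
  · -- not a quadric
    rintro ⟨Q, hQ⟩
    have hmemQ : ∀ (v : Fin 4 → F) (hv : v ≠ 0),
        Projectivization.mk F v hv ∈ O → Q v = 0 := by
      intro v hv hm
      rw [hQ] at hm
      obtain ⟨w, hw, hmk, hQw⟩ := hm
      rw [Projectivization.mk_eq_mk_iff'] at hmk
      obtain ⟨a, ha⟩ := hmk
      have hQv : Q v = (a * a) • Q w := by rw [← ha, QuadraticMap.map_smul]
      rw [hQv, hQw, smul_eq_mul, mul_zero]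
    have hQinf : Q ![0, 1, 0, 0] = 0 :=
      hmemQ _ titsAux_inf_ne ((hOmem _).2 (Or.inr rfl))
    have hQaff : ∀ x y : F, Q ![1, x * y + σ x * x ^ 2 + σ y, y, x] = 0 := by
      intro x y
      exact hmemQ _ (titsAux_vec_ne _ _ _) ((hOmem _).2 (Or.inl ⟨x, y, rfl⟩))
    have hQ0 : ∀ t : F, Q ![1, σ t, t, 0] = 0 := by
      intro t
      have h := hQaff 0 t
      have hexpr : (0:F) * t + σ 0 * 0 ^ 2 + σ t = σ t := by rw [hs0]; ring
      rw [hexpr] at h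
      exact h
    have hvec : ∀ s t : F, (![1, s, t, 0] : Fin 4 → F)
        = ![1,0,0,0] + s • ![0,1,0,0] + t • ![0,0,1,0] := by
      intro s t
      funext i
      fin_cases i <;> simp
    have hexp : ∀ s t : F, Q ![1, s, t, 0]
        = Q ![1,0,0,0] + s * s * Q ![0,1,0,0] + t * t * Q ![0,0,1,0]
          + s * QuadraticMap.polar Q ![1,0,0,0] ![0,1,0,0]
          + t * QuadraticMap.polar Q ![1,0,0,0] ![0,0,1,0]
          + s * t * QuadraticMap.polar Q ![0,1,0,0] ![0,0,1,0] := by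
      intro s t
      rw [hvec s t]
      exact titsAux_qexp Q _ _ _ s t
    -- the one-variable identity
    have hid : ∀ t : F, Q ![1,0,0,0] + t ^ 2 * Q ![0,0,1,0]
        + t ^ 2 ^ (e+1) * QuadraticMap.polar Q ![1,0,0,0] ![0,1,0,0]
        + t * QuadraticMap.polar Q ![1,0,0,0] ![0,0,1,0]
        + t ^ 2 ^ (e+1) * t * QuadraticMap.polar Q ![0,1,0,0] ![0,0,1,0] = 0 := by
      intro t
      have h := hQ0 t
      rw [hexp (σ t) t, hQinf, hσ] at h
      linear_combination h
    -- build the polynomial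
    set A0 := Q ![1,0,0,0] with hA0
    set C0 := Q ![0,0,1,0] with hC0
    set B0 := QuadraticMap.polar Q ![1,0,0,0] ![0,1,0,0] with hB0
    set D0 := QuadraticMap.polar Q ![1,0,0,0] ![0,0,1,0] with hD0
    set E0 := QuadraticMap.polar Q ![0,1,0,0] ![0,0,1,0] with hE0
    set P : Polynomial F := Polynomial.C A0 + Polynomial.C C0 * Polynomial.X ^ 2
      + Polynomial.C B0 * Polynomial.X ^ (2 ^ (e+1))
      + Polynomial.C D0 * Polynomial.X
      + Polynomial.C E0 * Polynomial.X ^ (2 ^ (e+1) + 1) with hP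
    have hPeval : ∀ t : F, P.eval t = 0 := by
      intro t
      rw [hP]
      simp only [Polynomial.eval_add, Polynomial.eval_mul, Polynomial.eval_pow,
        Polynomial.eval_C, Polynomial.eval_X]
      linear_combination hid t
    have h4 : 4 ≤ 2 ^ (e + 1) := by
      calc (4:ℕ) = 2 ^ 2 := by norm_num
      _ ≤ 2 ^ (e + 1) := Nat.pow_le_pow_right (by norm_num) (by omega)
    have hdegb : P.natDegree ≤ 2 ^ (e+1) + 1 := by
      rw [hP]
      refine (Polynomial.natDegree_add_le _ _).trans (max_le ?_ ?_)
      · refine (Polynomial.natDegree_add_le _ _).trans (max_le ?_ ?_)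
        · refine (Polynomial.natDegree_add_le _ _).trans (max_le ?_ ?_)
          · refine (Polynomial.natDegree_add_le _ _).trans (max_le ?_ ?_)
            · simp [Polynomial.natDegree_C]
            · exact (Polynomial.natDegree_C_mul_le _ _).trans
                (by simp only [Polynomial.natDegree_X_pow]; omega)
          · exact (Polynomial.natDegree_C_mul_le _ _).trans
              (by simp [Polynomial.natDegree_X_pow])
        · exact (Polynomial.natDegree_C_mul_le _ _).trans
            (by simp only [Polynomial.natDegree_X]; omega)
      · exact (Polynomial.natDegree_C_mul_le _ _).trans
          (by simp [Polynomial.natDegree_X_pow])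
    have hcardb : P.natDegree < Fintype.card F := by
      rw [hq]
      have h1 : 2 ^ (e+1) + 1 < 2 ^ (e+2) := by
        have : 2 ^ (e+2) = 2 * 2 ^ (e+1) := by ring
        omega
      have h2' : (2:ℕ) ^ (e+2) ≤ 2 ^ (2*e+1) := Nat.pow_le_pow_right (by norm_num) (by omega)
      omega
    have hP0 : P = 0 :=
      Polynomial.eq_zero_of_natDegree_lt_card_of_eval_eq_zero P
        Function.injective_id (fun t => hPeval t) (by simpa using hcardb)
    have hC0z : C0 = 0 := by
      have hco := congrArg (fun (p : Polynomial F) => p.coeff 2) hP0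
      rw [hP] at hco
      simp only [Polynomial.coeff_add, Polynomial.coeff_C_mul, Polynomial.coeff_X_pow,
        Polynomial.coeff_C, Polynomial.coeff_X, Polynomial.coeff_zero] at hco
      rw [if_neg (by norm_num : ¬(2:ℕ) = 0), if_pos trivial,
        if_neg (by omega : ¬(2:ℕ) = 2^(e+1)), if_neg (by norm_num : ¬(1:ℕ) = 2),
        if_neg (by omega : ¬(2:ℕ) = 2^(e+1)+1)] at hco
      linear_combination hco
    -- the point [0,0,1,0] is in the zero set but not in O
    have hu2ne : (![0,0,1,0] : Fin 4 → F) ≠ 0 := by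
      intro h
      have := congrFun h 2
      simp at this
    have hp0 : Projectivization.mk F ![0,0,1,0] hu2ne ∈
        {p : Projectivization F (Fin 4 → F) | ∃ (v : Fin 4 → F) (hv : v ≠ 0),
          p = Projectivization.mk F v hv ∧ Q v = 0} := by
      refine ⟨![0,0,1,0], hu2ne, rfl, ?_⟩
      rw [← hC0]
      exact hC0z
    rw [← hQ, hOmem] at hp0
    rcases hp0 with ⟨x, y, hc⟩ | hc
    · rw [Projectivization.mk_eq_mk_iff'] at hc
      obtain ⟨a, ha⟩ := hc
      have h0 := congrFun ha 0
      have h22 := congrFun ha 2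
      simp at h0 h22
      rw [h0] at h22
      simp at h22
    · rw [Projectivization.mk_eq_mk_iff'] at hc
      obtain ⟨a, ha⟩ := hc
      have h22 := congrFun ha 2
      simp at h22
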